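/- Let S be an additively divisible semiring (commutative, possibly without neutral elements) and let T(S) = {a ∈ S : a has finite order} be nonempty. Then T(S) is an ideal of S (closed under addition, and s·t ∈ T(S) for every s ∈ S and t ∈ T(S)) and T(S) is additively divisible: for every t ∈ T(S) and n ≥ 1 there exists t' ∈ T(S) with n·t' = t. If moreover S is additively uniquely divisible, then t + t = t for every t ∈ T(S). -/
import Mathlib


/-- `nmul n a` is the `n`-fold sum `a + ⋯ + a` (for `n ≥ 1`; `nmul 0 a = a` is junk). -/
def nmul {S : Type*} [Add S] (n : ℕ) (a : S) : S :=
  Nat.rec a (fun _ b => b + a) (n - 1)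

/-- `T(S)`: the set of elements of finite (additive) order. -/
def torsionSet (S : Type*) [Add S] : Set S :=
  {a | ∃ m n : ℕ, 1 ≤ m ∧ 1 ≤ n ∧ m ≠ n ∧ nmul m a = nmul n a}

section Aux

variable {S : Type*} [AddCommSemigroup S]

lemma nmul_succ' : ∀ n : ℕ, 1 ≤ n → ∀ a : S, nmul (n + 1) a = nmul n a + a := by
  intro n hn a
  match n, hn with
  | (k+1), _ => rfl

lemma nmul_addn (m : ℕ) (hm : 1 ≤ m) (a : S) :
    ∀ n : ℕ, 1 ≤ n → nmul (m + n) a = nmul m a + nmul n a := by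
  intro n hn
  induction n with
  | zero => omega
  | succ k ih =>
    rcases Nat.eq_zero_or_pos k with hk | hk
    · subst hk; exact nmul_succ' m hm a
    · have h1 : m + (k + 1) = (m + k) + 1 := by omega
      rw [h1, nmul_succ' (m + k) (by omega) a, ih hk, nmul_succ' k hk a, add_assoc]

lemma nmul_add_dist (a b : S) : ∀ n : ℕ, 1 ≤ n → nmul n (a + b) = nmul n a + nmul n b := by
  intro n hn
  induction n with
  | zero => omega
  | succ k ih =>
    rcases Nat.eq_zero_or_pos k with hk | hk
    · subst hk; rfl
    · rw [nmul_succ' k hk, ih hk, nmul_succ' k hk a, nmul_succ' k hk b]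
      exact add_add_add_comm _ _ _ _

lemma nmul_nmul (n : ℕ) (hn : 1 ≤ n) (a : S) :
    ∀ m : ℕ, 1 ≤ m → nmul m (nmul n a) = nmul (m * n) a := by
  intro m hm
  induction m with
  | zero => omega
  | succ k ih =>
    rcases Nat.eq_zero_or_pos k with hk | hk
    · subst hk; rw [zero_add, one_mul]; rfl
    · rw [nmul_succ' k hk, ih hk, ← nmul_addn (k * n) (Nat.mul_pos hk hn) a n hn]
      congr 1
      ring

lemma nmul_period (a : S) (m n : ℕ) (hm : 1 ≤ m) (hmn : m < n) (h : nmul m a = nmul n a) :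
    ∀ k, m ≤ k → nmul k a = nmul (k + (n - m)) a := by
  intro k hk
  rcases Nat.eq_or_lt_of_le hk with h' | hk'
  · have h2 : m + (n - m) = n := by omega
    rw [← h', h2]; exact h
  · have h1 : 1 ≤ k - m := by omega
    have hj : k = m + (k - m) := by omega
    rw [hj, nmul_addn m hm a _ h1, h, ← nmul_addn n (by omega) a _ h1]
    congr 1
    omega

lemma nmul_period_iter (a : S) (m n : ℕ) (hm : 1 ≤ m) (hmn : m < n)
    (h : nmul m a = nmul n a) :
    ∀ i k, m ≤ k → nmul k a = nmul (k + i * (n - m)) a := by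
  intro i
  induction i with
  | zero => simp
  | succ j ih =>
    intro k hk
    have h2 : k + (j + 1) * (n - m) = (k + j * (n - m)) + (n - m) := by
      rw [Nat.succ_mul]; ring
    rw [ih k hk, h2, ← nmul_period a m n hm hmn h (k + j * (n - m)) (by omega)]

/-- Normalized torsion data: a base `m` and period `d`. -/
lemma torsion_norm (a : S) (ha : a ∈ torsionSet S) :
    ∃ m d : ℕ, 1 ≤ m ∧ 1 ≤ d ∧ ∀ k, m ≤ k → ∀ i, nmul k a = nmul (k + i * d) a := by
  obtain ⟨p, q, hp, hq, hpq, heq⟩ := ha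
  rcases Nat.lt_or_ge p q with h | h
  · exact ⟨p, q - p, hp, by omega, fun k hk i => nmul_period_iter a p q hp h heq i k hk⟩
  · have hqp : q < p := by omega
    exact ⟨q, p - q, hq, by omega, fun k hk i => nmul_period_iter a q p hq hqp heq.symm i k hk⟩

end Aux

theorem stmt_7 {S : Type*} [AddCommSemigroup S] [CommSemigroup S]
    (hdl : ∀ a b c : S, a * (b + c) = a * b + a * c)
    (hdr : ∀ a b c : S, (a + b) * c = a * c + b * c)
    (hdiv : ∀ a : S, ∀ n : ℕ, 1 ≤ n → ∃ b : S, nmul n b = a)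
    (hne : (torsionSet S).Nonempty) :
    ((∀ a ∈ torsionSet S, ∀ b ∈ torsionSet S, a + b ∈ torsionSet S) ∧
     (∀ s : S, ∀ t ∈ torsionSet S, s * t ∈ torsionSet S) ∧
     (∀ t ∈ torsionSet S, ∀ n : ℕ, 1 ≤ n → ∃ t' ∈ torsionSet S, nmul n t' = t)) ∧
    ((∀ a : S, ∀ n : ℕ, 1 ≤ n → ∃! b : S, nmul n b = a) →
      ∀ t ∈ torsionSet S, t + t = t) := by
  have mul_nmul : ∀ s t : S, ∀ n : ℕ, 1 ≤ n → s * nmul n t = nmul n (s * t) := by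
    intro s t n hn
    induction n with
    | zero => omega
    | succ k ih =>
      rcases Nat.eq_zero_or_pos k with hk | hk
      · subst hk; rfl
      · rw [nmul_succ' k hk, hdl, ih hk, nmul_succ' k hk]
  constructor
  · refine ⟨?_, ?_, ?_⟩
    · -- closed under addition
      intro a ha b hb
      obtain ⟨m, d, hm, hd, hP⟩ := torsion_norm a ha
      obtain ⟨m', d', hm', hd', hP'⟩ := torsion_norm b hb
      set k := max m m' with hk
      refine ⟨k, k + d * d', by omega, by omega, by have := Nat.mul_pos hd hd'; omega, ?_⟩
      have ha' : nmul k a = nmul (k + d' * d) a := hP k (le_max_left _ _) d'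
      have hb' : nmul k b = nmul (k + d * d') b := hP' k (le_max_right _ _) d
      rw [nmul_add_dist a b k (by omega), nmul_add_dist a b (k + d * d') (by omega),
        ha', hb', mul_comm d' d]
    · -- ideal under multiplication
      intro s t ht
      obtain ⟨m, n, hm, hn, hmn, heq⟩ := ht
      exact ⟨m, n, hm, hn, hmn, by
        rw [← mul_nmul s t m hm, ← mul_nmul s t n hn, heq]⟩
    · -- divisibility within torsion
      intro t ht n hn
      obtain ⟨b, hb⟩ := hdiv t n hn
      obtain ⟨p, q, hp, hq, hpq, heq⟩ := ht
      refine ⟨b, ⟨p * n, q * n, Nat.mul_pos hp hn, Nat.mul_pos hq hn, ?_, ?_⟩, hb⟩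
      · intro h
        exact hpq (Nat.eq_of_mul_eq_mul_right (by omega) h)
      · rw [← nmul_nmul n hn b p hp, ← nmul_nmul n hn b q hq, hb, heq]
  · -- unique divisibility ⇒ idempotent
    intro huniq t ht
    obtain ⟨m, d, hm, hd, hP⟩ := torsion_norm t ht
    set k := m * d with hk
    have hk1 : 1 ≤ k := Nat.mul_pos hm hd
    have hkm : m ≤ k := Nat.le_mul_of_pos_right m hd
    have h1 : nmul k t = nmul (k + k) t := by
      have := hP k hkm m
      rwa [show k + m * d = k + k from rfl] at this
    have h2 : nmul k (t + t) = nmul k t := by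
      rw [nmul_add_dist t t k hk1, ← nmul_addn k hk1 t k hk1, ← h1]
    obtain ⟨b, hb, hub⟩ := huniq (nmul k t) k hk1
    have e1 : t + t = b := hub _ h2
    have e2 : t = b := hub _ rfl
    rw [e1, e2]
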